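/- Let D be a positive integer with D ≡ 1 (mod 4) and set ϖ := (1−D)/4 ∈ ℤ. Let x, y be integers with x ≥ 2, y ≥ 1 and x² + x·y + ϖ·y² = 1, and set g₁ := gcd(x+1, y), g₂ := gcd(x−1, y). Then (2x+y)² − 4 = D·y²; moreover g₁² divides 2x+y+2, g₂² divides 2x+y−2, and ((2x+y+2)/g₁²) · ((2x+y−2)/g₂²) = D. -/

import Mathlib

/-- Second assertion of Lemma `lem:factor`: with `g₁ = gcd(x+1,y)`,
`g₂ = gcd(x−1,y)`, one has `(2x+y)² − 4 = D·y²`, the squares `g₁²`, `g₂²`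
divide `2x+y+2` and `2x+y−2` respectively, and the product of the quotients
equals `D`. -/
theorem factorization_of_D_from_fundamental_unit
    (D : ℤ) (hD : 0 < D) (hD4 : D % 4 = 1)
    (varpi : ℤ) (hv : 4 * varpi = 1 - D)
    (x y : ℤ) (hx : 2 ≤ x) (hy : 1 ≤ y)
    (hunit : x ^ 2 + x * y + varpi * y ^ 2 = 1)
    (g₁ g₂ : ℤ) (hg₁ : g₁ = Int.gcd (x + 1) y) (hg₂ : g₂ = Int.gcd (x - 1) y) :
    (2 * x + y) ^ 2 - 4 = D * y ^ 2 ∧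
    g₁ ^ 2 ∣ 2 * x + y + 2 ∧
    g₂ ^ 2 ∣ 2 * x + y - 2 ∧
    ((2 * x + y + 2) / g₁ ^ 2) * ((2 * x + y - 2) / g₂ ^ 2) = D := by
  have hyne : y ≠ 0 := by omega
  have key1 : (2 * x + y) ^ 2 - 4 = D * y ^ 2 := by linear_combination 4 * hunit - y ^ 2 * hv
  have e1 : (2 * x + y + 2) * (2 * x + y - 2) = D * y ^ 2 := by linear_combination key1
  have h1a : g₁ ∣ x + 1 := hg₁ ▸ Int.gcd_dvd_left _ _
  have h1b : g₁ ∣ y := hg₁ ▸ Int.gcd_dvd_right _ _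
  have h2a : g₂ ∣ x - 1 := hg₂ ▸ Int.gcd_dvd_left _ _
  have h2b : g₂ ∣ y := hg₂ ▸ Int.gcd_dvd_right _ _
  obtain ⟨a, ha⟩ := h1a
  obtain ⟨b, hb⟩ := h1b
  obtain ⟨c, hc⟩ := h2a
  obtain ⟨d, hd⟩ := h2b
  have hdvd1 : g₁ ^ 2 ∣ 2 * x + y + 2 := by
    refine ⟨a ^ 2 + a * b + varpi * b ^ 2, ?_⟩
    linear_combination -hunit + (x + 1 + g₁ * a + y) * ha + (g₁ * a + varpi * (y + g₁ * b)) * hb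
  have hdvd2 : g₂ ^ 2 ∣ 2 * x + y - 2 := by
    refine ⟨-(c ^ 2 + c * d + varpi * d ^ 2), ?_⟩
    linear_combination hunit - (x - 1 + g₂ * c + y) * hc - (g₂ * c + varpi * (y + g₂ * d)) * hd
  -- positivity of g₁, g₂
  have hg₁pos : 0 < g₁ := by
    rw [hg₁]
    exact_mod_cast Nat.pos_of_ne_zero fun h => hyne ((Int.gcd_eq_zero_iff.mp h).2)
  have hg₂pos : 0 < g₂ := by
    rw [hg₂]
    exact_mod_cast Nat.pos_of_ne_zero fun h => hyne ((Int.gcd_eq_zero_iff.mp h).2)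
  -- y divides g₁ * g₂
  have hydvd : y ∣ g₁ * g₂ := by
    have hprod : y ∣ (x + 1) * (x - 1) := ⟨-(x + varpi * y), by linear_combination hunit⟩
    have hN : y.natAbs ∣ (x + 1).natAbs * ((x - 1).natAbs) := by
      rw [← Int.natAbs_mul]; exact Int.natAbs_dvd_natAbs.mpr hprod
    have := (Nat.dvd_gcd_mul_gcd_iff_dvd_mul
      (k := y.natAbs) (n := (x + 1).natAbs) (m := (x - 1).natAbs)).mpr hN
    have h' : (y.natAbs : ℤ) ∣ (Int.gcd (x + 1) y : ℤ) * (Int.gcd (x - 1) y : ℤ) := by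
      rw [Int.gcd, Int.gcd, Nat.gcd_comm (x + 1).natAbs, Nat.gcd_comm (x - 1).natAbs]
      exact_mod_cast this
    rw [hg₁, hg₂]
    exact Int.natAbs_dvd.mp h'
  -- g₁ * g₂ divides 2 * y
  have hdvd2y : g₁ * g₂ ∣ 2 * y := by
    set G₁ : ℕ := Int.gcd (x + 1) y with hG₁
    set G₂ : ℕ := Int.gcd (x - 1) y with hG₂
    have hgcd2 : (Nat.gcd G₁ G₂ : ℤ) ∣ 2 := by
      have d1 : (Nat.gcd G₁ G₂ : ℤ) ∣ x + 1 :=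
        dvd_trans (hg₁ ▸ Int.natCast_dvd_natCast.mpr (Nat.gcd_dvd_left _ _)) ⟨a, ha⟩
      have d2 : (Nat.gcd G₁ G₂ : ℤ) ∣ x - 1 :=
        dvd_trans (hg₂ ▸ Int.natCast_dvd_natCast.mpr (Nat.gcd_dvd_right _ _)) ⟨c, hc⟩
      have := dvd_sub d1 d2
      simpa using this
    have hlcm : (Nat.lcm G₁ G₂ : ℤ) ∣ y := by
      have l1 : (G₁ : ℕ) ∣ y.natAbs := Nat.gcd_dvd_right _ _
      have l2 : (G₂ : ℕ) ∣ y.natAbs := Nat.gcd_dvd_right _ _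
      have := Nat.lcm_dvd l1 l2
      exact Int.dvd_natAbs.mp (Int.natCast_dvd_natCast.mpr this)
    have hmul : g₁ * g₂ = (Nat.gcd G₁ G₂ : ℤ) * (Nat.lcm G₁ G₂ : ℤ) := by
      rw [hg₁, hg₂]
      exact_mod_cast (Nat.gcd_mul_lcm G₁ G₂).symm
    rw [hmul]
    exact mul_dvd_mul hgcd2 hlcm
  -- conclude g₁ * g₂ = y
  obtain ⟨k, hk⟩ := hydvd
  have hk2 : k ∣ 2 := by
    rcases hdvd2y with ⟨m, hm⟩
    refine ⟨m, mul_left_cancel₀ hyne ?_⟩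
    linear_combination hm + m * hk
  have hkpos : 0 < k := by
    by_contra h
    push_neg at h
    nlinarith [mul_pos hg₁pos hg₂pos]
  have hkle : k ≤ 2 := Int.le_of_dvd (by norm_num) hk2
  have hprodD : (g₁ * g₂) ^ 2 ∣ D * y ^ 2 := by
    rw [← e1, mul_pow]
    exact mul_dvd_mul hdvd1 hdvd2
  have hk1 : k = 1 := by
    rcases (by omega : k = 1 ∨ k = 2) with h | h
    · exact h
    · exfalso
      rw [hk, h] at hprodD
      obtain ⟨m, hm⟩ := hprodD
      have hDm : D = 4 * m := mul_right_cancel₀ (pow_ne_zero 2 hyne) (by linear_combination hm)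
      omega
  have hgy : g₁ * g₂ = y := by rw [hk, hk1, mul_one]
  refine ⟨key1, hdvd1, hdvd2, ?_⟩
  obtain ⟨A, hA⟩ := hdvd1
  obtain ⟨B, hB⟩ := hdvd2
  rw [hA, hB, Int.mul_ediv_cancel_left _ (pow_ne_zero 2 hg₁pos.ne'),
    Int.mul_ediv_cancel_left _ (pow_ne_zero 2 hg₂pos.ne')]
  have h2 : g₁ ^ 2 * A * (g₂ ^ 2 * B) = D * y ^ 2 := by rw [← hA, ← hB]; exact e1
  exact mul_right_cancel₀ (pow_ne_zero 2 hyne)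
    (by linear_combination h2 - A * B * (y + g₁ * g₂) * hgy)
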